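/- Lower bound direction of the split formula: for any i ≤ i' and j ≤ j' such that P is simultaneously realizable in the segments A[i..i'] and B[j..j'] (P is a sublist of both segments with the first symbol at the segment start and the last at the segment end), there exists a common sublist C of A and B with P as an infix and |C| ≥ LLCS(A[1..i-1], B[1..j-1]) + r + LLCS(A[i'+1..n], B[j'+1..m]). -/

import Mathlib

/-- Maximum length of a common sublist (LCS length) of `X` and `Y`. -/
def LLCS {σ : Type} [DecidableEq σ] (X Y : List σ) : ℕ :=
  ((X.sublists.filter (fun C => decide (C.Sublist Y))).map List.length).foldr max 0

/-- `I` is an appearance (embedding witness) of `P` in `A`: a strictly increasing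
list of (0-based) indices realizing `P` as a sublist of `A`. -/
def IsApp {σ : Type} (A P : List σ) (I : List ℕ) : Prop :=
  I.Chain' (· < ·) ∧ I.length = P.length ∧ ∀ t, t < I.length → A[I.getD t 0]? = P[t]?

/-- A greedy (compact) appearance: each next index is the least possible one. -/
def IsGreedy {σ : Type} (A P : List σ) (I : List ℕ) : Prop :=
  IsApp A P I ∧ ∀ t, t + 1 < I.length → ∀ k, I.getD t 0 < k → A[k]? = P[t+1]? →
    I.getD (t+1) 0 ≤ k

set_option maxHeartbeats 1000000

lemma llcs_exists {σ : Type} [DecidableEq σ] (X Y : List σ) :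
    ∃ Z : List σ, Z.Sublist X ∧ Z.Sublist Y ∧ Z.length =
      ((X.sublists.filter (fun C => decide (C.Sublist Y))).map List.length).foldr max 0 := by
  have key : ∀ M : List ℕ, M.foldr max 0 ∈ M ∨ M.foldr max 0 = 0 := by
    intro M; induction M with
    | nil => right; rfl
    | cons a t ih =>
      simp only [List.foldr_cons]
      rcases Nat.le_total (t.foldr max 0) a with h | h
      · left; rw [max_eq_left h]; exact List.mem_cons_self
      · rw [max_eq_right h]
        rcases ih with h2 | h2
        · left; exact List.mem_cons_of_mem _ h2
        · right; exact h2
  set L := (X.sublists.filter (fun C => decide (C.Sublist Y))).map List.length with hL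
  rcases key L with h | h
  · rw [List.mem_map] at h
    obtain ⟨Z, hZ, hlen⟩ := h
    rw [List.mem_filter, List.mem_sublists] at hZ
    exact ⟨Z, hZ.1, of_decide_eq_true hZ.2, hlen⟩
  · exact ⟨[], List.nil_sublist _, List.nil_sublist _, h.symm⟩

lemma app_segment {σ : Type} (A P : List σ) (I : List ℕ) (i i' : ℕ) (hP : P ≠ [])
    (h : IsApp A P I) (hh : I.head? = some i) (hl : I.getLast? = some i') :
    P.Sublist ((A.take (i' + 1)).drop i) := by
  obtain ⟨hchain, hlen, hget⟩ := h
  set r := P.length with hr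
  have hr1 : 1 ≤ r := List.length_pos_iff.mpr hP
  have h0 : I[0]? = some i := by cases I <;> simp at hh ⊢ <;> exact hh
  have hlast : I[r - 1]? = some i' := by
    rw [← hlen] at *
    rw [← List.getLast?_eq_getElem?]; exact hl
  have mono : ∀ s t, s < t → t < I.length → I.getD s 0 < I.getD t 0 := by
    intro s t hst ht
    have hpw := List.isChain_iff_pairwise.mp hchain
    have := List.pairwise_iff_getElem.mp hpw s t (by omega) ht hst
    simp only [List.getD_eq_getElem?_getD, List.getElem?_eq_getElem (by omega : s < I.length), List.getElem?_eq_getElem ht, Option.getD_some]; exact this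
  have hgd0 : I.getD 0 0 = i := by
    rw [List.getD_eq_getElem?_getD]; rw [h0]; rfl
  have hgdl : I.getD (r - 1) 0 = i' := by
    rw [List.getD_eq_getElem?_getD]; rw [hlast]; rfl
  have bounds : ∀ t, t < I.length → i ≤ I.getD t 0 ∧ I.getD t 0 ≤ i' := by
    intro t ht
    constructor
    · rcases Nat.eq_zero_or_pos t with rfl | hpos
      · omega
      · have := mono 0 t hpos ht; omega
    · rcases Nat.lt_or_ge t (r - 1) with hlt | hge
      · have := mono t (r - 1) hlt (by omega); omega
      · have : t = r - 1 := by omega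
        subst this; omega
  have hii' : i ≤ i' := by have := bounds 0 (by omega); omega
  have hAlen : i' < A.length := by
    have : A[I.getD (r - 1) 0]? = P[r - 1]? := hget (r - 1) (by omega)
    rw [hgdl] at this
    have hPs : (P[r - 1]?).isSome := by
      rw [List.getElem?_eq_getElem (by omega : r - 1 < P.length)]; rfl
    rw [← this] at hPs
    by_contra hc
    rw [List.getElem?_eq_none (by omega)] at hPs
    simp at hPs
  have hseglen : ((A.take (i' + 1)).drop i).length = i' + 1 - i := by
    simp [List.length_drop, List.length_take]; omega
  set f : ℕ → ℕ := fun ix => if ix < r then I.getD ix 0 - i else ix - r + (i' + 1 - i) with hf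
  have hmono : StrictMono f := by
    intro a b hab
    simp only [hf]
    by_cases ha : a < r <;> by_cases hb : b < r
    · have h1 := bounds a (by omega)
      have h2 := mono a b hab (by omega)
      simp only [if_pos ha, if_pos hb]; omega
    · have h1 := bounds a (by omega)
      simp only [if_pos ha, if_neg hb]; omega
    · omega
    · simp only [if_neg ha, if_neg hb]; omega
  apply List.sublist_of_orderEmbedding_getElem?_eq (OrderEmbedding.ofStrictMono f hmono)
  intro ix
  simp only [OrderEmbedding.coe_ofStrictMono, hf]
  by_cases hix : ix < r
  · have hb := bounds ix (by omega)
    rw [if_pos hix, List.getElem?_drop, List.getElem?_take_of_lt (by omega : i + (I.getD ix 0 - i) < i' + 1),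
      (by omega : i + (I.getD ix 0 - i) = I.getD ix 0)]
    exact (hget ix (by omega)).symm
  · rw [if_neg hix, List.getElem?_eq_none (by omega : P.length ≤ ix),
      List.getElem?_eq_none (by omega : ((A.take (i' + 1)).drop i).length ≤ ix - r + (i' + 1 - i))]
theorem stmt12 {σ : Type} [DecidableEq σ] (A B P : List σ) (hP : P ≠ [])
    (i i' j j' : ℕ) (hii : i ≤ i') (hjj : j ≤ j')
    (hA : ∃ I : List ℕ, IsApp A P I ∧ I.head? = some i ∧ I.getLast? = some i')
    (hB : ∃ J : List ℕ, IsApp B P J ∧ J.head? = some j ∧ J.getLast? = some j') :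
    ∃ C al ga : List σ, C = al ++ P ++ ga ∧ C.Sublist A ∧ C.Sublist B ∧
      LLCS (A.take i) (B.take j) + P.length +
        LLCS (A.drop (i' + 1)) (B.drop (j' + 1)) ≤ C.length := by
  obtain ⟨I, hIa, hIh, hIl⟩ := hA
  obtain ⟨J, hJa, hJh, hJl⟩ := hB
  have hSA : P.Sublist ((A.take (i' + 1)).drop i) := app_segment A P I i i' hP hIa hIh hIl
  have hSB : P.Sublist ((B.take (j' + 1)).drop j) := app_segment B P J j j' hP hJa hJh hJl
  obtain ⟨al, hal1, hal2, hal3⟩ := llcs_exists (A.take i) (B.take j)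
  obtain ⟨ga, hga1, hga2, hga3⟩ := llcs_exists (A.drop (i' + 1)) (B.drop (j' + 1))
  refine ⟨al ++ P ++ ga, al, ga, rfl, ?_, ?_, ?_⟩
  · have hdecomp : A.take i ++ ((A.take (i' + 1)).drop i) ++ A.drop (i' + 1) = A := by
      have h1 : A.take i ++ (A.take (i' + 1)).drop i = A.take (i' + 1) := by
        conv_rhs => rw [← List.take_append_drop i (A.take (i' + 1))]
        rw [List.take_take, min_eq_left (by omega)]
      rw [h1, List.take_append_drop]
    rw [← hdecomp]
    exact ((hal1.append hSA).append hga1)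
  · have hdecomp : B.take j ++ ((B.take (j' + 1)).drop j) ++ B.drop (j' + 1) = B := by
      have h1 : B.take j ++ (B.take (j' + 1)).drop j = B.take (j' + 1) := by
        conv_rhs => rw [← List.take_append_drop j (B.take (j' + 1))]
        rw [List.take_take, min_eq_left (by omega)]
      rw [h1, List.take_append_drop]
    rw [← hdecomp]
    exact ((hal2.append hSB).append hga2)
  · simp only [List.length_append, LLCS]
    omega
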